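/- Let P₁, P₂, P₃ ⊆ ℝ² be the three closed 120° sectors centered at the origin, P_m = {(r cos φ, r sin φ) : r ≥ 0, φ ∈ [2π(m−1)/3 − π/3, 2π(m−1)/3 + π/3]} for m ∈ {1,2,3}, and set Aᵢ = Pᵢ × ℝ ⊆ ℝ³. Then ∑_{i=1}^3 ‖∫_{Aᵢ} x dγ₃(x)‖₂² = 9/(8π); in particular the bound 9/(8π) in the Propeller inequality is attained by the propeller partition. -/

import Mathlib

open MeasureTheory Real

noncomputable section

abbrev E3 := EuclideanSpace ℝ (Fin 3)

/-- The standard Gaussian measure on `ℝ³`, with density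
`x ↦ (2π)^{-3/2} exp(-‖x‖²/2)` with respect to Lebesgue measure. -/
def gaussian3 : Measure E3 :=
  (volume : Measure E3).withDensity fun x =>
    ENNReal.ofReal ((Real.sqrt ((2 * Real.pi) ^ 3))⁻¹ * Real.exp (-‖x‖ ^ 2 / 2))

open Set Filter Topology
open scoped NNReal ENNReal


def secAngle (m : Fin 3) : ℝ := 2 * π * (m : ℕ) / 3

def Sec (m : Fin 3) : Set (ℝ × ℝ) :=
  {q | ∃ r : ℝ, 0 ≤ r ∧ ∃ φ : ℝ, φ ∈ Icc (secAngle m - π / 3) (secAngle m + π / 3) ∧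
    q.1 = r * Real.cos φ ∧ q.2 = r * Real.sin φ}

def JJ : Fin 3 → Set ℝ := ![Icc (-(π/3)) (π/3), Ico (π/3) π, Ioc (-π) (-(π/3))]

lemma measurableSet_sec (m : Fin 3) : MeasurableSet (Sec m) := by
  have h : Sec m = ⋃ n : ℕ,
      (fun rφ : ℝ × ℝ => (rφ.1 * Real.cos rφ.2, rφ.1 * Real.sin rφ.2)) ''
        (Icc 0 (n : ℝ) ×ˢ Icc (secAngle m - π / 3) (secAngle m + π / 3)) := by
    ext q
    simp only [Sec, mem_setOf_eq, mem_iUnion, mem_image, mem_prod, mem_Icc, Prod.exists]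
    constructor
    · rintro ⟨r, hr, φ, hφ, h1, h2⟩
      exact ⟨⌈r⌉₊, r, φ, ⟨⟨hr, Nat.le_ceil r⟩, hφ.1, hφ.2⟩, by
        rw [Prod.ext_iff]; exact ⟨h1.symm, h2.symm⟩⟩
    · rintro ⟨n, r, φ, ⟨⟨hr, _⟩, hφ1, hφ2⟩, h⟩
      exact ⟨r, hr, φ, ⟨hφ1, hφ2⟩, by rw [← h], by rw [← h]⟩
  rw [h]
  refine MeasurableSet.iUnion fun n => ((isCompact_Icc.prod isCompact_Icc).image ?_).measurableSet
  fun_prop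

lemma J_subset (m : Fin 3) : JJ m ⊆ Ioo (-π) π := by
  have hπ := pi_pos
  fin_cases m <;> intro x hx <;>
    simp only [JJ, Matrix.cons_val_zero, Matrix.cons_val_one, Matrix.head_cons,
      Matrix.cons_val_two, Matrix.tail_cons, mem_Icc, mem_Ico, mem_Ioc] at hx <;>
    exact ⟨by linarith [hx.1], by linarith [hx.2]⟩

lemma measurableSet_J (m : Fin 3) : MeasurableSet (JJ m) := by
  fin_cases m <;>
    simp only [JJ, Matrix.cons_val_zero, Matrix.cons_val_one, Matrix.head_cons,
      Matrix.cons_val_two, Matrix.tail_cons]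
  exacts [measurableSet_Icc, measurableSet_Ico, measurableSet_Ioc]

private lemma int_cast_eq (k n : ℤ) (h1 : (n:ℝ) - 1 < k) (h2 : (k:ℝ) < n + 1) : k = n := by
  have a : n - 1 < k := by exact_mod_cast h1
  have b : k < n + 1 := by exact_mod_cast h2
  omega

lemma mem_sec_iff (m : Fin 3) {r ψ : ℝ} (hr : 0 < r) (hψ : ψ ∈ Ioo (-π) π) :
    (r * Real.cos ψ, r * Real.sin ψ) ∈ Sec m ↔ ψ ∈ JJ m := by
  have hπ := pi_pos
  have hp2 : (0:ℝ) < 2 * π := by linarith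
  obtain ⟨hψ1, hψ2⟩ := hψ
  constructor
  · rintro ⟨r', hr', φ, hφ, h1, h2⟩
    simp only at h1 h2
    have e1 := Real.sin_sq_add_cos_sq φ
    have e2 := Real.sin_sq_add_cos_sq ψ
    have c1 : (r' * Real.cos φ)^2 + (r' * Real.sin φ)^2 = r'^2 := by
      linear_combination (r'^2) * e1
    have c2 : (r * Real.cos ψ)^2 + (r * Real.sin ψ)^2 = r^2 := by
      linear_combination (r^2) * e2
    have hsq : r' ^ 2 = r ^ 2 := by rw [← c1, ← c2, h1, h2]
    have hrr : r' = r := by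
      rcases mul_eq_zero.mp (show (r' - r) * (r' + r) = 0 by linear_combination hsq) with h | h
      · linarith
      · linarith
    rw [hrr] at h1 h2
    have hcos : Real.cos φ = Real.cos ψ := (mul_left_cancel₀ (ne_of_gt hr) h1).symm
    have hsin : Real.sin φ = Real.sin ψ := (mul_left_cancel₀ (ne_of_gt hr) h2).symm
    obtain ⟨k, hk⟩ := Real.Angle.angle_eq_iff_two_pi_dvd_sub.mp
      (Real.Angle.cos_sin_inj hcos hsin)
    obtain ⟨hφ1, hφ2⟩ := hφ
    fin_cases m <;> norm_num [secAngle] at hφ1 hφ2 <;>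
      simp only [JJ, Matrix.cons_val_zero, Matrix.cons_val_one, Matrix.head_cons,
        Matrix.cons_val_two, Matrix.tail_cons, mem_Icc, mem_Ico, mem_Ioc]
    · -- m = 0 : k = 0
      have hk0 : k = 0 := int_cast_eq k 0
        ((mul_lt_mul_iff_right₀ hp2).mp (by push_cast; linarith [hk]))
        ((mul_lt_mul_iff_right₀ hp2).mp (by push_cast; linarith [hk]))
      rw [hk0] at hk
      norm_num at hk
      constructor <;> linarith
    · -- m = 1 : k = 0
      have hk0 : k = 0 := int_cast_eq k 0
        ((mul_lt_mul_iff_right₀ hp2).mp (by push_cast; linarith [hk]))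
        ((mul_lt_mul_iff_right₀ hp2).mp (by push_cast; linarith [hk]))
      rw [hk0] at hk
      norm_num at hk
      constructor <;> linarith
    · -- m = 2 : k = 1
      have hk0 : k = 1 := int_cast_eq k 1
        ((mul_lt_mul_iff_right₀ hp2).mp (by push_cast; linarith [hk]))
        ((mul_lt_mul_iff_right₀ hp2).mp (by push_cast; linarith [hk]))
      rw [hk0] at hk
      norm_num at hk
      constructor <;> linarith
  · intro h
    fin_cases m <;>
      simp only [JJ, Matrix.cons_val_zero, Matrix.cons_val_one, Matrix.head_cons,
        Matrix.cons_val_two, Matrix.tail_cons, mem_Icc, mem_Ico, mem_Ioc] at h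
    · refine ⟨r, hr.le, ψ, ⟨?_, ?_⟩, rfl, rfl⟩ <;> norm_num [secAngle] <;> linarith [h.1, h.2]
    · refine ⟨r, hr.le, ψ, ⟨?_, ?_⟩, rfl, rfl⟩ <;> norm_num [secAngle] <;> linarith [h.1, h.2]
    · refine ⟨r, hr.le, ψ + 2 * π, ⟨?_, ?_⟩, ?_, ?_⟩
      · norm_num [secAngle]; linarith [h.1]
      · norm_num [secAngle]; linarith [h.2]
      · rw [Real.cos_add_two_pi]
      · rw [Real.sin_add_two_pi]

noncomputable section

lemma fun_gauss : (fun z : ℝ => Real.exp (-z^2/2)) = (fun z => Real.exp (-(1/2:ℝ)*z^2)) := by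
  funext z; rw [show (-z^2/2 : ℝ) = -(1/2:ℝ)*z^2 by ring]

lemma fun_idgauss : (fun z : ℝ => z * Real.exp (-z^2/2))
    = (fun z => z * Real.exp (-(1/2:ℝ)*z^2)) := by
  funext z; rw [show (-z^2/2 : ℝ) = -(1/2:ℝ)*z^2 by ring]

lemma integrable_gauss1 : Integrable (fun z : ℝ => Real.exp (-z^2/2)) := by
  rw [fun_gauss]; exact integrable_exp_neg_mul_sq (by norm_num)

lemma integrable_idgauss1 : Integrable (fun z : ℝ => z * Real.exp (-z^2/2)) := by
  rw [fun_idgauss]; exact integrable_mul_exp_neg_mul_sq (by norm_num)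

lemma integral_gauss1 : ∫ z : ℝ, Real.exp (-z^2/2) = Real.sqrt (2*π) := by
  rw [fun_gauss, integral_gaussian]
  congr 1; ring

lemma integral_idgauss1 : ∫ z : ℝ, z * Real.exp (-z^2/2) = 0 := by
  have h := integral_neg_eq_self (fun z : ℝ => z * Real.exp (-z^2/2)) volume
  simp only [neg_sq, neg_mul] at h
  rw [integral_neg] at h
  linarith

lemma integral_gauss_Ioi : ∫ z in Ioi (0:ℝ), Real.exp (-z^2/2) = Real.sqrt (2*π) / 2 := by
  rw [fun_gauss, integral_gaussian_Ioi]
  congr 2; ring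

lemma integrableOn_r2gauss : IntegrableOn (fun r : ℝ => r^2 * Real.exp (-r^2/2)) (Ioi 0) := by
  have h := integrableOn_rpow_mul_exp_neg_mul_sq (b := (1/2:ℝ)) (by norm_num) (s := 2) (by norm_num)
  refine IntegrableOn.congr_fun h (fun x hx => ?_) measurableSet_Ioi
  rw [Real.rpow_two, show (-(1/2:ℝ)*x^2 : ℝ) = -x^2/2 by ring]

lemma integral_r2gauss : ∫ r in Ioi (0:ℝ), r^2 * Real.exp (-r^2/2) = Real.sqrt (2*π) / 2 := by
  have hderiv : ∀ r : ℝ, HasDerivAt (fun r : ℝ => -(r * Real.exp (-r^2/2)))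
      ((r^2 - 1) * Real.exp (-r^2/2)) r := by
    intro r
    have h0 := ((hasDerivAt_pow 2 r).neg).div_const 2
    have h1 : HasDerivAt (fun x : ℝ => -x^2/2) (-r) r := by
      refine h0.congr_deriv ?_
      push_cast
      ring
    have h2 := h1.exp
    have h3 := ((hasDerivAt_id r).mul h2).neg
    refine h3.congr_deriv ?_
    simp only [id_eq, one_mul]
    ring
  have hint : IntegrableOn (fun r : ℝ => (r^2 - 1) * Real.exp (-r^2/2)) (Ioi 0) := by
    refine IntegrableOn.congr_fun (integrableOn_r2gauss.sub integrable_gauss1.integrableOn)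
      (fun x _ => ?_) measurableSet_Ioi
    simp only [Pi.sub_apply]
    ring
  have hlin : Tendsto (fun x : ℝ => -(1/2:ℝ) * x) atTop atBot := by
    have h := (tendsto_const_mul_atTop_of_pos (show (0:ℝ) < 1/2 by norm_num)).mpr
      (tendsto_id (α := ℝ))
    have h2 := tendsto_neg_atTop_atBot.comp h
    exact Tendsto.congr (fun x => by simp [Function.comp_apply]) h2
  have htendexp : Tendsto (fun x : ℝ => Real.exp (-(1/2:ℝ)*x)) atTop (𝓝 0) := by
    exact Tendsto.congr (fun x => rfl) (Real.tendsto_exp_atBot.comp hlin)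
  have htend : Tendsto (fun r : ℝ => -(r * Real.exp (-r^2/2))) atTop (𝓝 0) := by
    have h := (rpow_mul_exp_neg_mul_sq_isLittleO_exp_neg (by norm_num : (0:ℝ) < 1/2) 1).isBigO
    have h2 : Tendsto (fun x : ℝ => x ^ (1:ℝ) * Real.exp (-(1/2:ℝ)*x^2)) atTop (𝓝 0) :=
      h.trans_tendsto htendexp
    have h3 : (fun x : ℝ => x ^ (1:ℝ) * Real.exp (-(1/2:ℝ)*x^2))
        = fun x : ℝ => x * Real.exp (-x^2/2) := by
      funext x; rw [Real.rpow_one, show (-(1/2:ℝ)*x^2 : ℝ) = -x^2/2 by ring]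
    rw [h3] at h2
    simpa using h2.neg
  have key := integral_Ioi_of_hasDerivAt_of_tendsto' (fun x _ => hderiv x) hint htend
  norm_num at key
  have hsplit : ∫ r in Ioi (0:ℝ), (r^2 - 1) * Real.exp (-r^2/2)
      = (∫ r in Ioi (0:ℝ), r^2 * Real.exp (-r^2/2)) - ∫ r in Ioi (0:ℝ), Real.exp (-r^2/2) := by
    rw [← integral_sub integrableOn_r2gauss integrable_gauss1.integrableOn]
    congr 1; funext r; ring
  rw [hsplit, integral_gauss_Ioi] at key
  linarith

def CC : Fin 3 → ℝ := ![Real.sqrt 3, -(Real.sqrt 3/2), -(Real.sqrt 3/2)]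
def SS : Fin 3 → ℝ := ![0, 3/2, -(3/2)]

lemma integral_J_cos (m : Fin 3) : ∫ φ in JJ m, Real.cos φ = CC m := by
  have hπ := pi_pos
  fin_cases m <;>
    simp only [JJ, CC, Fin.zero_eta, Fin.mk_one, Fin.reduceFinMk, Fin.isValue, Matrix.cons_val_zero, Matrix.cons_val_one, Matrix.head_cons,
      Matrix.cons_val_two, Matrix.tail_cons]
  · rw [integral_Icc_eq_integral_Ioc, ← intervalIntegral.integral_of_le (by linarith),
      integral_cos]
    rw [Real.sin_pi_div_three]
    rw [Real.sin_neg, Real.sin_pi_div_three]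
    ring
  · rw [integral_Ico_eq_integral_Ioo, ← integral_Ioc_eq_integral_Ioo,
      ← intervalIntegral.integral_of_le (by linarith), integral_cos]
    rw [Real.sin_pi, Real.sin_pi_div_three]
    ring
  · rw [← intervalIntegral.integral_of_le (by linarith), integral_cos]
    rw [Real.sin_neg, Real.sin_neg, Real.sin_pi, Real.sin_pi_div_three]
    ring

lemma integral_J_sin (m : Fin 3) : ∫ φ in JJ m, Real.sin φ = SS m := by
  have hπ := pi_pos
  fin_cases m <;>
    simp only [JJ, SS, Fin.zero_eta, Fin.mk_one, Fin.reduceFinMk, Fin.isValue, Matrix.cons_val_zero, Matrix.cons_val_one, Matrix.head_cons,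
      Matrix.cons_val_two, Matrix.tail_cons]
  · rw [integral_Icc_eq_integral_Ioc, ← intervalIntegral.integral_of_le (by linarith),
      integral_sin]
    rw [Real.cos_neg]
    ring
  · rw [integral_Ico_eq_integral_Ioo, ← integral_Ioc_eq_integral_Ioo,
      ← intervalIntegral.integral_of_le (by linarith), integral_sin]
    rw [Real.cos_pi, Real.cos_pi_div_three]
    ring
  · rw [← intervalIntegral.integral_of_le (by linarith), integral_sin]
    rw [Real.cos_neg, Real.cos_neg, Real.cos_pi, Real.cos_pi_div_three]
    ring

lemma sector_polar (m : Fin 3) (t : ℝ → ℝ) (u : ℝ × ℝ → ℝ)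
    (hu : ∀ r φ : ℝ, u (r * Real.cos φ, r * Real.sin φ) = r * t φ) :
    ∫ q in Sec m, u q * Real.exp (-(q.1^2+q.2^2)/2) =
      (Real.sqrt (2*π) / 2) * ∫ φ in JJ m, t φ := by
  have h1 : ∫ q in Sec m, u q * Real.exp (-(q.1^2+q.2^2)/2)
      = ∫ q, (Sec m).indicator (fun q : ℝ × ℝ => u q * Real.exp (-(q.1^2+q.2^2)/2)) q :=
    (integral_indicator (measurableSet_sec m)).symm
  rw [h1, ← integral_comp_polarCoord_symm]
  have heq : EqOn
      (fun p : ℝ × ℝ => p.1 •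
        (Sec m).indicator (fun q : ℝ × ℝ => u q * Real.exp (-(q.1^2+q.2^2)/2))
          (polarCoord.symm p))
      ((Ioi (0:ℝ) ×ˢ JJ m).indicator
        (fun p : ℝ × ℝ => (p.1^2 * Real.exp (-p.1^2/2)) * t p.2))
      polarCoord.target := by
    intro p hp
    rw [polarCoord_target] at hp
    obtain ⟨hp1, hp2⟩ := hp
    have hnorm : (p.1 * Real.cos p.2)^2 + (p.1 * Real.sin p.2)^2 = p.1^2 := by
      have := Real.sin_sq_add_cos_sq p.2
      linear_combination p.1^2 * this
    by_cases h : p.2 ∈ JJ m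
    · have hmem : polarCoord.symm p ∈ Sec m := by
        rw [polarCoord_symm_apply]
        exact (mem_sec_iff m hp1 hp2).mpr h
      simp only [indicator_of_mem hmem, indicator_of_mem (show p ∈ Ioi (0:ℝ) ×ˢ JJ m from ⟨hp1, h⟩)]
      rw [polarCoord_symm_apply]
      simp only [hu, hnorm, smul_eq_mul]
      ring
    · have hmem : polarCoord.symm p ∉ Sec m := by
        rw [polarCoord_symm_apply]
        exact fun hc => h ((mem_sec_iff m hp1 hp2).mp hc)
      simp only [indicator_of_notMem hmem,
        indicator_of_notMem (show p ∉ Ioi (0:ℝ) ×ˢ JJ m from fun hc => h hc.2)]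
      simp
  rw [setIntegral_congr_fun polarCoord.open_target.measurableSet heq]
  rw [setIntegral_indicator (measurableSet_Ioi.prod (measurableSet_J m))]
  rw [show polarCoord.target ∩ (Ioi (0:ℝ) ×ˢ JJ m) = Ioi (0:ℝ) ×ˢ JJ m from
    inter_eq_self_of_subset_right (prod_mono_right (J_subset m))]
  rw [MeasureTheory.Measure.volume_eq_prod]
  rw [setIntegral_prod_mul (fun r : ℝ => r^2 * Real.exp (-r^2/2)) t (Ioi 0) (JJ m),
    integral_r2gauss]

lemma sector_fst (m : Fin 3) :
    ∫ q in Sec m, q.1 * Real.exp (-(q.1^2+q.2^2)/2) = (Real.sqrt (2*π) / 2) * CC m := by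
  rw [sector_polar m Real.cos (fun q => q.1) (fun r φ => rfl), integral_J_cos]

lemma sector_snd (m : Fin 3) :
    ∫ q in Sec m, q.2 * Real.exp (-(q.1^2+q.2^2)/2) = (Real.sqrt (2*π) / 2) * SS m := by
  rw [sector_polar m Real.sin (fun q => q.2) (fun r φ => rfl), integral_J_sin]

def Fq : (ℝ × (ℝ × ℝ)) ≃ᵐ E3 :=
  (MeasurableEquiv.prodCongr (MeasurableEquiv.refl ℝ) MeasurableEquiv.finTwoArrow.symm).trans
    ((MeasurableEquiv.piFinSuccAbove (fun _ : Fin 3 => ℝ) 2).symm.trans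
      (MeasurableEquiv.toLp 2 (Fin 3 → ℝ)))

lemma Fq_zero (p : ℝ × (ℝ × ℝ)) : Fq p 0 = p.2.1 := by
  simp [Fq, MeasurableEquiv.piFinSuccAbove, MeasurableEquiv.finTwoArrow,
    MeasurableEquiv.prodCongr, MeasurableEquiv.coe_toLp, Fin.insertNthEquiv]
  rfl

lemma Fq_one (p : ℝ × (ℝ × ℝ)) : Fq p 1 = p.2.2 := by
  simp [Fq, MeasurableEquiv.piFinSuccAbove, MeasurableEquiv.finTwoArrow,
    MeasurableEquiv.prodCongr, MeasurableEquiv.coe_toLp, Fin.insertNthEquiv]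
  rfl

lemma Fq_two (p : ℝ × (ℝ × ℝ)) : Fq p 2 = p.1 := by
  simp [Fq, MeasurableEquiv.piFinSuccAbove, MeasurableEquiv.finTwoArrow,
    MeasurableEquiv.prodCongr, MeasurableEquiv.coe_toLp, Fin.insertNthEquiv]

lemma mpFq : MeasurePreserving Fq volume volume := by
  have h1 := ((EuclideanSpace.volume_preserving_symm_measurableEquiv_toLp (Fin 3)).symm)
  have h2 := (measurePreserving_piFinSuccAbove (fun _ : Fin 3 => (volume : Measure ℝ)) 2).symm
  have h3 := ((MeasurePreserving.id (volume : Measure ℝ)).prod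
      (volume_preserving_finTwoArrow ℝ).symm)
  exact h1.comp (h2.comp h3)

def rho3 : E3 → ℝ := fun x => (Real.sqrt ((2 * Real.pi) ^ 3))⁻¹ * Real.exp (-‖x‖ ^ 2 / 2)

lemma norm_sq_E3 (x : E3) : ‖x‖^2 = x 0^2 + x 1^2 + x 2^2 := by
  rw [EuclideanSpace.norm_eq, Real.sq_sqrt (by positivity)]
  rw [Fin.sum_univ_three]
  simp [Real.norm_eq_abs, sq_abs]

lemma rho_comp (p : ℝ × (ℝ × ℝ)) :
    rho3 (Fq p) = (Real.sqrt ((2 * Real.pi) ^ 3))⁻¹ *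
      (Real.exp (-p.1^2/2) * (Real.exp (-p.2.1^2/2) * Real.exp (-p.2.2^2/2))) := by
  have hn := norm_sq_E3 (Fq p)
  rw [Fq_zero, Fq_one, Fq_two] at hn
  rw [rho3]
  rw [hn, show -(p.2.1^2 + p.2.2^2 + p.1^2)/2
      = (-p.1^2/2) + ((-p.2.1^2/2) + (-p.2.2^2/2)) by ring,
    Real.exp_add, Real.exp_add]

def AA (m : Fin 3) : Set E3 := {x : E3 | (x 0, x 1) ∈ Sec m}

lemma measurable_coords01 : Measurable (fun x : E3 => (x 0, x 1)) := by
  have h0 : Measurable (fun x : E3 => x 0) :=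
    (measurable_pi_apply 0).comp (MeasurableEquiv.toLp 2 (Fin 3 → ℝ)).symm.measurable
  have h1 : Measurable (fun x : E3 => x 1) :=
    (measurable_pi_apply 1).comp (MeasurableEquiv.toLp 2 (Fin 3 → ℝ)).symm.measurable
  exact h0.prodMk h1

lemma measurableSet_AA (m : Fin 3) : MeasurableSet (AA m) :=
  measurable_coords01 (measurableSet_sec m)

lemma preimage_AA (m : Fin 3) : Fq ⁻¹' (AA m) = univ ×ˢ Sec m := by
  ext p
  simp only [AA, mem_preimage, mem_setOf_eq, Fq_zero, Fq_one, mem_prod, mem_univ, true_and]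

def Kc : ℝ := π * (Real.sqrt ((2 * Real.pi) ^ 3))⁻¹

lemma integrable_coord (m : Fin 3) (k : Fin 3) :
    Integrable (fun x : E3 => rho3 x * x k) (volume.restrict (AA m)) := by
  refine Integrable.integrableOn ?_
  rw [← mpFq.map_eq, integrable_map_equiv]
  set c : ℝ := (Real.sqrt ((2 * Real.pi) ^ 3))⁻¹ with hc
  fin_cases k
  · show Integrable ((fun x : E3 => rho3 x * x 0) ∘ Fq) volume
    have h : ((fun x : E3 => rho3 x * x 0) ∘ Fq)
        = fun p : ℝ × (ℝ × ℝ) => Real.exp (-p.1^2/2) *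
          (c * ((p.2.1 * Real.exp (-p.2.1^2/2)) * Real.exp (-p.2.2^2/2))) := by
      funext p
      simp only [Function.comp_apply, rho_comp, Fq_zero, ← hc]
      ring
    rw [h, MeasureTheory.Measure.volume_eq_prod]
    exact integrable_gauss1.mul_prod ((integrable_idgauss1.mul_prod integrable_gauss1).const_mul c)
  · show Integrable ((fun x : E3 => rho3 x * x 1) ∘ Fq) volume
    have h : ((fun x : E3 => rho3 x * x 1) ∘ Fq)
        = fun p : ℝ × (ℝ × ℝ) => Real.exp (-p.1^2/2) *
          (c * (Real.exp (-p.2.1^2/2) * (p.2.2 * Real.exp (-p.2.2^2/2)))) := by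
      funext p
      simp only [Function.comp_apply, rho_comp, Fq_one, ← hc]
      ring
    rw [h, MeasureTheory.Measure.volume_eq_prod]
    exact integrable_gauss1.mul_prod ((integrable_gauss1.mul_prod integrable_idgauss1).const_mul c)
  · show Integrable ((fun x : E3 => rho3 x * x 2) ∘ Fq) volume
    have h : ((fun x : E3 => rho3 x * x 2) ∘ Fq)
        = fun p : ℝ × (ℝ × ℝ) => (p.1 * Real.exp (-p.1^2/2)) *
          (c * (Real.exp (-p.2.1^2/2) * Real.exp (-p.2.2^2/2))) := by
      funext p
      simp only [Function.comp_apply, rho_comp, Fq_two, ← hc]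
      ring
    rw [h, MeasureTheory.Measure.volume_eq_prod]
    exact integrable_idgauss1.mul_prod ((integrable_gauss1.mul_prod integrable_gauss1).const_mul c)

lemma exp_combine (a b : ℝ) :
    Real.exp (-a^2/2) * Real.exp (-b^2/2) = Real.exp (-(a^2+b^2)/2) := by
  rw [← Real.exp_add]; congr 1; ring

lemma coord_integral_zero (m : Fin 3) :
    ∫ x in AA m, rho3 x * x 0 ∂volume = Kc * CC m := by
  rw [← mpFq.map_eq, setIntegral_map_equiv, preimage_AA]
  set c : ℝ := (Real.sqrt ((2 * Real.pi) ^ 3))⁻¹ with hc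
  have h : (fun p : ℝ × (ℝ × ℝ) => rho3 (Fq p) * Fq p 0)
      = fun p : ℝ × (ℝ × ℝ) => Real.exp (-p.1^2/2) *
        (c * (p.2.1 * Real.exp (-(p.2.1^2 + p.2.2^2)/2))) := by
    funext p
    rw [rho_comp, Fq_zero, ← exp_combine, ← hc]
    ring
  rw [h, MeasureTheory.Measure.volume_eq_prod]
  rw [setIntegral_prod_mul (fun z : ℝ => Real.exp (-z^2/2))
    (fun q : ℝ × ℝ => c * (q.1 * Real.exp (-(q.1^2+q.2^2)/2))) univ (Sec m)]
  rw [Measure.restrict_univ, integral_gauss1, integral_const_mul, sector_fst]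
  have hs : Real.sqrt (2*π) * Real.sqrt (2*π) = 2*π := Real.mul_self_sqrt (by positivity)
  rw [Kc, hc]
  linear_combination ((Real.sqrt ((2 * Real.pi) ^ 3))⁻¹ * CC m / 2) * hs

lemma coord_integral_one (m : Fin 3) :
    ∫ x in AA m, rho3 x * x 1 ∂volume = Kc * SS m := by
  rw [← mpFq.map_eq, setIntegral_map_equiv, preimage_AA]
  set c : ℝ := (Real.sqrt ((2 * Real.pi) ^ 3))⁻¹ with hc
  have h : (fun p : ℝ × (ℝ × ℝ) => rho3 (Fq p) * Fq p 1)
      = fun p : ℝ × (ℝ × ℝ) => Real.exp (-p.1^2/2) *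
        (c * (p.2.2 * Real.exp (-(p.2.1^2 + p.2.2^2)/2))) := by
    funext p
    rw [rho_comp, Fq_one, ← exp_combine, ← hc]
    ring
  rw [h, MeasureTheory.Measure.volume_eq_prod]
  rw [setIntegral_prod_mul (fun z : ℝ => Real.exp (-z^2/2))
    (fun q : ℝ × ℝ => c * (q.2 * Real.exp (-(q.1^2+q.2^2)/2))) univ (Sec m)]
  rw [Measure.restrict_univ, integral_gauss1, integral_const_mul, sector_snd]
  have hs : Real.sqrt (2*π) * Real.sqrt (2*π) = 2*π := Real.mul_self_sqrt (by positivity)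
  rw [Kc, hc]
  linear_combination ((Real.sqrt ((2 * Real.pi) ^ 3))⁻¹ * SS m / 2) * hs

lemma coord_integral_two (m : Fin 3) :
    ∫ x in AA m, rho3 x * x 2 ∂volume = 0 := by
  rw [← mpFq.map_eq, setIntegral_map_equiv, preimage_AA]
  set c : ℝ := (Real.sqrt ((2 * Real.pi) ^ 3))⁻¹ with hc
  have h : (fun p : ℝ × (ℝ × ℝ) => rho3 (Fq p) * Fq p 2)
      = fun p : ℝ × (ℝ × ℝ) => (p.1 * Real.exp (-p.1^2/2)) *
        (c * Real.exp (-(p.2.1^2 + p.2.2^2)/2)) := by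
    funext p
    rw [rho_comp, Fq_two, ← exp_combine, ← hc]
    ring
  rw [h, MeasureTheory.Measure.volume_eq_prod]
  rw [setIntegral_prod_mul (fun z : ℝ => z * Real.exp (-z^2/2))
    (fun q : ℝ × ℝ => c * Real.exp (-(q.1^2+q.2^2)/2)) univ (Sec m)]
  rw [Measure.restrict_univ, integral_idgauss1, zero_mul]

lemma integral_sector (m : Fin 3) :
    ∫ x in AA m, x ∂gaussian3 =
      (Kc * CC m) • EuclideanSpace.single 0 (1:ℝ) + (Kc * SS m) • EuclideanSpace.single 1 1 := by
  rw [gaussian3, restrict_withDensity (measurableSet_AA m)]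
  have hmeas : Measurable (fun x : E3 =>
      Real.toNNReal ((Real.sqrt ((2 * Real.pi) ^ 3))⁻¹ * Real.exp (-‖x‖ ^ 2 / 2))) := by
    fun_prop
  rw [show (fun x : E3 => ENNReal.ofReal ((Real.sqrt ((2 * Real.pi) ^ 3))⁻¹ *
      Real.exp (-‖x‖ ^ 2 / 2)))
      = (fun x : E3 => ((Real.toNNReal ((Real.sqrt ((2 * Real.pi) ^ 3))⁻¹ *
        Real.exp (-‖x‖ ^ 2 / 2)) : ℝ≥0) : ENNReal)) from rfl]
  rw [integral_withDensity_eq_integral_smul hmeas]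
  have hfun : (fun x : E3 => (Real.toNNReal ((Real.sqrt ((2 * Real.pi) ^ 3))⁻¹ *
      Real.exp (-‖x‖ ^ 2 / 2))) • x)
      = fun x : E3 => ∑ k : Fin 3, ((rho3 x * x k) • EuclideanSpace.single k (1:ℝ)) := by
    funext x
    rw [NNReal.smul_def, Real.coe_toNNReal _ (by positivity)]
    ext j
    rw [Fin.sum_univ_three]
    fin_cases j <;>
      simp [EuclideanSpace.single_apply, rho3, PiLp.add_apply, PiLp.smul_apply, smul_eq_mul]
  rw [hfun, integral_finset_sum _ (fun k _ => ((integrable_coord m k).smul_const _))]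
  simp_rw [integral_smul_const]
  rw [Fin.sum_univ_three, coord_integral_zero, coord_integral_one, coord_integral_two]
  simp

lemma norm_sq_val (c d : ℝ) :
    ‖((c • EuclideanSpace.single 0 (1:ℝ) + d • EuclideanSpace.single 1 1) : E3)‖^2
      = c^2 + d^2 := by
  rw [EuclideanSpace.norm_eq, Real.sq_sqrt (by positivity), Fin.sum_univ_three]
  simp [EuclideanSpace.single_apply, PiLp.add_apply, PiLp.smul_apply, smul_eq_mul,
    Real.norm_eq_abs, sq_abs]

lemma Kc_sq : Kc^2 = 1/(8*π) := by
  have hs : Real.sqrt ((2*π)^3) ^ 2 = (2*π)^3 := Real.sq_sqrt (by positivity)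
  have hne : Real.sqrt ((2*π)^3) ≠ 0 := by positivity
  have hπ : π ≠ 0 := pi_ne_zero
  have h2 : Kc^2 = π^2 * (Real.sqrt ((2*π)^3)^2)⁻¹ := by rw [Kc]; ring
  rw [h2, hs]
  field_simp
  ring

/-- The propeller partition attains the bound `9/(8π)`: if `P₁, P₂, P₃ ⊆ ℝ²` are the
three closed `120°` sectors centered at the origin and `Aᵢ = Pᵢ × ℝ ⊆ ℝ³`, then
`∑_{i=1}^3 ‖∫_{Aᵢ} x dγ₃(x)‖² = 9/(8π)`. Here the sector with index `m ∈ {0,1,2}`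
(corresponding to `m ∈ {1,2,3}` shifted by one) is
`{(r cos φ, r sin φ) : r ≥ 0, φ ∈ [2πm/3 − π/3, 2πm/3 + π/3]}`. -/
theorem propeller_partition_attains_bound (A : Fin 3 → Set E3)
    (hA : ∀ m : Fin 3, A m =
      {x : E3 | ∃ r : ℝ, 0 ≤ r ∧ ∃ φ : ℝ,
        φ ∈ Set.Icc (2 * Real.pi * (m : ℕ) / 3 - Real.pi / 3)
          (2 * Real.pi * (m : ℕ) / 3 + Real.pi / 3) ∧
        x 0 = r * Real.cos φ ∧ x 1 = r * Real.sin φ}) :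
    ∑ m : Fin 3, ‖∫ x in A m, x ∂gaussian3‖ ^ 2 = 9 / (8 * Real.pi) := by
  have hAA : ∀ m, A m = AA m := by
    intro m
    rw [hA m]
    rfl
  have h3 : Real.sqrt 3 ^ 2 = 3 := Real.sq_sqrt (by norm_num)
  have hK := Kc_sq
  rw [Fin.sum_univ_three, hAA 0, hAA 1, hAA 2,
    integral_sector 0, integral_sector 1, integral_sector 2,
    norm_sq_val, norm_sq_val, norm_sq_val]
  simp only [CC, SS, Fin.isValue, Matrix.cons_val_zero, Matrix.cons_val_one, Matrix.head_cons,
    Matrix.cons_val_two, Matrix.tail_cons]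
  have hexp : (Kc*Real.sqrt 3)^2 + (Kc*0)^2 + ((Kc*(-(Real.sqrt 3/2)))^2 + (Kc*(3/2))^2)
      + ((Kc*(-(Real.sqrt 3/2)))^2 + (Kc*(-(3/2)))^2) = 9 * Kc^2 := by
    linear_combination (3/2 * Kc^2) * h3
  rw [show (9:ℝ)/(8*π) = 9 * (1/(8*π)) by ring, ← hK]
  linear_combination hexp
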